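/- Let p ≥ 1, A ⊆ T_n, and let {h_w}_{w∈A} with h_w : S^m(A) → [0,1], h_w ≡ 1 on S^m(w), h_w ≡ 0 outside S^m(Γ_M^A(w)), and ℰ_{p,S^m(A)}^{n+m}(h_w) = ℰ_{M,p,m}(w,A) (the optimal conductance). Set h = ∑_{w∈A} h_w and φ_w = h_w / h. Then {φ_w}_{w∈A} is a partition of unity on S^m(A) satisfying: ∑_w φ_w ≡ 1, φ_w ≥ L_*^{−M} on S^m(w), φ_w ≡ 0 off S^m(Γ_M^A(w)), and ℰ_{p,S^m(A)}^{n+m}(φ_w) ≤ (L_*^{2M+1} + 1)^p · max_{w' ∈ Γ_{2M+1}^A(w)} ℰ_{M,p,m}(w', A). -/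

import Mathlib

open Finset
open scoped Classical

/-- The discrete `p`-energy of `f` restricted to a set `B` of vertices, for an
edge relation `E`. -/
noncomputable def relEnergy {W : Type*} [Fintype W] (E : W → W → Prop) (B : Set W)
    (p : ℝ) (f : W → ℝ) : ℝ :=
  (1 / 2) * ∑ x, ∑ y, if E x y ∧ x ∈ B ∧ y ∈ B then |f x - f y| ^ p else 0

/-- The `M`-neighborhood `Γ_M(w)` of a cell `w` with respect to the cell adjacency
relation `En`: points reachable by chains of length at most `M`. -/
def Gam {ι : Type*} (En : ι → ι → Prop) : ℕ → ι → Set ι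
  | 0, w => {w}
  | M + 1, w => Gam En M w ∪ {u | ∃ v ∈ Gam En M w, En v u}

/-- The optimal conductance `ℰ_{M,p,m}(w,A)`: the infimum of energies of functions
that are `1` on the cell `S^m(w)` (the fiber of `π` over `w`) and `0` outside
`S^m(Γ_M(w))`. -/
noncomputable def condInf {ι W : Type*} [Fintype W] (Em : W → W → Prop) (π : W → ι)
    (En : ι → ι → Prop) (M : ℕ) (p : ℝ) (w : ι) : ℝ :=
  sInf {e | ∃ f : W → ℝ, (∀ u, π u = w → f u = 1) ∧
    (∀ u, π u ∉ Gam En M w → f u = 0) ∧ e = relEnergy Em Set.univ p f}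

namespace Aux14
variable {ι : Type*} {En : ι → ι → Prop}

lemma gam_self (M : ℕ) (w : ι) : w ∈ Gam En M w := by
  induction M with
  | zero => exact rfl
  | succ M ih => exact Or.inl ih

lemma gam_succ (M : ℕ) (w : ι) : Gam En M w ⊆ Gam En (M + 1) w :=
  Set.subset_union_left

lemma gam_mono {M M' : ℕ} (h : M ≤ M') (w : ι) : Gam En M w ⊆ Gam En M' w := by
  induction M' with
  | zero => obtain rfl : M = 0 := Nat.le_zero.mp h; exact subset_rfl
  | succ M' ih =>
    rcases Nat.lt_or_ge M (M' + 1) with h' | h'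
    · exact (ih (Nat.lt_succ_iff.mp h')).trans (gam_succ M' w)
    · obtain rfl : M = M' + 1 := le_antisymm h h'
      exact subset_rfl

lemma gam_trans {K : ℕ} (M : ℕ) {x v : ι} (hv : v ∈ Gam En K x) :
    Gam En M v ⊆ Gam En (K + M) x := by
  induction M with
  | zero => intro u hu; obtain rfl : u = v := hu; exact hv
  | succ M ih =>
    intro u hu
    rcases hu with hu | ⟨z, hz, hzu⟩
    · exact gam_succ _ _ (ih hu)
    · exact Or.inr ⟨z, ih hz, hzu⟩

lemma gam_symm (hEn : ∀ x y, En x y → En y x) (M : ℕ) {x y : ι}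
    (h : x ∈ Gam En M y) : y ∈ Gam En M x := by
  induction M generalizing x y with
  | zero => exact h.symm
  | succ M ih =>
    rcases h with h | ⟨v, hv, hvx⟩
    · exact gam_succ _ _ (ih h)
    · have h1 : v ∈ Gam En 1 x := Or.inr ⟨x, rfl, hEn v x hvx⟩
      have := gam_trans M h1 (ih hv)
      rwa [Nat.add_comm] at this

lemma gam_card [Fintype ι] {L : ℕ} (hL : ∀ x : ι, (Gam En 1 x).ncard ≤ L)
    (M : ℕ) (x : ι) : (Gam En M x).ncard ≤ L ^ M := by
  induction M with
  | zero => simp [Gam, Set.ncard_singleton]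
  | succ M ih =>
    have hsub : (Set.toFinite (Gam En (M+1) x)).toFinset ⊆
        ((Set.toFinite (Gam En M x)).toFinset).biUnion
          (fun v => (Set.toFinite (Gam En 1 v)).toFinset) := by
      intro u hu
      rw [Set.Finite.mem_toFinset] at hu
      rw [Finset.mem_biUnion]
      rcases hu with hu | ⟨v, hv, hvu⟩
      · exact ⟨u, by rwa [Set.Finite.mem_toFinset], by
          rw [Set.Finite.mem_toFinset]; exact gam_self 1 u⟩
      · exact ⟨v, by rwa [Set.Finite.mem_toFinset], by
          rw [Set.Finite.mem_toFinset]; exact Or.inr ⟨v, rfl, hvu⟩⟩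
    have h1 : (Gam En (M+1) x).ncard ≤
        ∑ v ∈ (Set.toFinite (Gam En M x)).toFinset, (Gam En 1 v).ncard := by
      rw [Set.ncard_eq_toFinset_card _ (Set.toFinite _)]
      calc (Set.toFinite (Gam En (M+1) x)).toFinset.card
          ≤ _ := Finset.card_le_card hsub
        _ ≤ ∑ v ∈ (Set.toFinite (Gam En M x)).toFinset,
              (Set.toFinite (Gam En 1 v)).toFinset.card := Finset.card_biUnion_le
        _ = _ := by
            refine Finset.sum_congr rfl fun v _ => ?_
            rw [Set.ncard_eq_toFinset_card _ (Set.toFinite _)]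
    calc (Gam En (M+1) x).ncard
        ≤ ∑ v ∈ (Set.toFinite (Gam En M x)).toFinset, (Gam En 1 v).ncard := h1
      _ ≤ ∑ _v ∈ (Set.toFinite (Gam En M x)).toFinset, L :=
          Finset.sum_le_sum fun v _ => hL v
      _ = (Set.toFinite (Gam En M x)).toFinset.card * L := by
          rw [Finset.sum_const, smul_eq_mul]
      _ = (Gam En M x).ncard * L := by
          rw [Set.ncard_eq_toFinset_card _ (Set.toFinite _)]
      _ ≤ L ^ M * L := Nat.mul_le_mul_right _ ih
      _ = L ^ (M + 1) := by ring

lemma energy_nonneg {W : Type*} [Fintype W] (Em : W → W → Prop) (B : Set W)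
    (p : ℝ) (f : W → ℝ) : 0 ≤ relEnergy Em B p f := by
  unfold relEnergy
  refine mul_nonneg (by norm_num) (Finset.sum_nonneg fun x _ =>
    Finset.sum_nonneg fun y _ => ?_)
  split
  · exact Real.rpow_nonneg (abs_nonneg _) p
  · exact le_refl _

end Aux14

/-- Existence of a partition of unity `φ_w = h_w / ∑ h_v` built from optimal
conductance functions `h_w`, with energies controlled by the conductance
exponents of the `(2M+1)`-neighborhood. -/
theorem statement14 {ι W : Type*} [Fintype ι] [Fintype W]
    (En : ι → ι → Prop) (hEn : ∀ x y, En x y → En y x)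
    (Em : W → W → Prop) (hEm : ∀ x y, Em x y → Em y x)
    (π : W → ι)
    (hcompat : ∀ u v : W, Em u v → π u = π v ∨ En (π u) (π v))
    (L M : ℕ) (hL : ∀ x : ι, (Gam En 1 x).ncard ≤ L)
    (p : ℝ) (hp : 1 ≤ p)
    (h : ι → W → ℝ)
    (hrange : ∀ w u, h w u ∈ Set.Icc (0 : ℝ) 1)
    (hone : ∀ w u, π u = w → h w u = 1)
    (hzero : ∀ w u, π u ∉ Gam En M w → h w u = 0)
    (hopt : ∀ w, relEnergy Em Set.univ p (h w) = condInf Em π En M p w) :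
    (∀ u : W, ∑ w, h w u / (∑ v, h v u) = 1) ∧
    (∀ w u, π u = w → ((L : ℝ) ^ M)⁻¹ ≤ h w u / (∑ v, h v u)) ∧
    (∀ w u, π u ∉ Gam En M w → h w u / (∑ v, h v u) = 0) ∧
    (∀ w, relEnergy Em Set.univ p (fun u => h w u / (∑ v, h v u)) ≤
      ((L : ℝ) ^ (2 * M + 1) + 1) ^ p *
        sSup {e | ∃ w' ∈ Gam En (2 * M + 1) w, e = condInf Em π En M p w'}) := by
  set H : W → ℝ := fun u => ∑ v, h v u with hHdef
  have hH1 : ∀ u, 1 ≤ H u := by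
    intro u
    have := Finset.single_le_sum (f := fun v => h v u)
      (fun v _ => (hrange v u).1) (Finset.mem_univ (π u))
    rwa [hone (π u) u rfl] at this
  have hHpos : ∀ u, 0 < H u := fun u => lt_of_lt_of_le one_pos (hH1 u)
  -- L ≥ 1 given any element of ι
  have hL1 : ∀ _w : ι, 1 ≤ L := by
    intro w
    have h1 : 0 < (Gam En 1 w).ncard :=
      Set.ncard_pos (Set.toFinite _) |>.mpr ⟨w, Aux14.gam_self 1 w⟩
    exact le_trans h1 (hL w)
  have hHle : ∀ u, H u ≤ (L : ℝ) ^ M := by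
    intro u
    set T : Finset ι := (Set.toFinite (Gam En M (π u))).toFinset with hT
    have hsum : H u = ∑ v ∈ T, h v u := by
      rw [hHdef]
      refine (Finset.sum_subset (Finset.subset_univ T) ?_).symm
      intro v _ hv
      refine hzero v u ?_
      intro hmem
      exact hv (by rw [Set.Finite.mem_toFinset]; exact Aux14.gam_symm hEn M hmem)
    have hcard : T.card ≤ L ^ M := by
      rw [← Set.ncard_eq_toFinset_card _ (Set.toFinite _)]
      exact Aux14.gam_card hL M (π u)
    calc H u = ∑ v ∈ T, h v u := hsum
      _ ≤ ∑ _v ∈ T, (1 : ℝ) := Finset.sum_le_sum fun v _ => (hrange v u).2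
      _ = T.card := by rw [Finset.sum_const, nsmul_eq_mul, mul_one]
      _ ≤ ((L : ℝ)) ^ M := by exact_mod_cast hcard
  refine ⟨?_, ?_, ?_, ?_⟩
  · intro u
    rw [← Finset.sum_div, div_self (ne_of_gt (hHpos u))]
  · intro w u hu
    rw [hone w u hu]
    have hLM : (0 : ℝ) < (L : ℝ) ^ M := by
      have : (1 : ℝ) ≤ (L : ℝ) := by exact_mod_cast hL1 w
      positivity
    rw [one_div]
    exact inv_anti₀ (hHpos u) (hHle u)
  · intro w u hu
    rw [hzero w u hu, zero_div]
  · intro w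
    have hL1' : (1 : ℝ) ≤ (L : ℝ) := by exact_mod_cast hL1 w
    set φ : W → ℝ := fun u => h w u / H u with hφdef
    set Γ : Finset ι := (Set.toFinite (Gam En (2 * M + 1) w)).toFinset with hΓ
    have hΓmem : ∀ w', w' ∈ Γ ↔ w' ∈ Gam En (2 * M + 1) w := fun w' =>
      Set.Finite.mem_toFinset _
    have hwΓ : w ∈ Γ := (hΓmem w).mpr (Aux14.gam_self _ w)
    set K : ℝ := (L : ℝ) ^ (2 * M + 1) with hK
    have hK0 : (0 : ℝ) ≤ K := by positivity
    have hΓcard : (Γ.card : ℝ) ≤ K := by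
      have := Aux14.gam_card hL (2 * M + 1) w
      rw [Set.ncard_eq_toFinset_card _ (Set.toFinite _)] at this
      rw [hK, ← hΓ] at *
      calc (Γ.card : ℝ) ≤ ((L ^ (2 * M + 1) : ℕ) : ℝ) := by exact_mod_cast this
        _ = (L : ℝ) ^ (2 * M + 1) := by push_cast; ring
    set N : ℝ := K + 1 with hN
    have hN1 : 1 ≤ N := by linarith
    have hNpos : 0 < N := by linarith
    set Ssup := sSup {e | ∃ w' ∈ Gam En (2 * M + 1) w, e = condInf Em π En M p w'}
      with hS
    have hbdd : BddAbove {e | ∃ w' ∈ Gam En (2 * M + 1) w,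
        e = condInf Em π En M p w'} := by
      have hsetim : {e | ∃ w' ∈ Gam En (2 * M + 1) w, e = condInf Em π En M p w'} =
          (fun w' => condInf Em π En M p w') '' Gam En (2 * M + 1) w := by
        ext e
        simp [Set.mem_image, eq_comm]
      rw [hsetim]
      exact ((Set.toFinite _).image _).bddAbove
    have hmemS : ∀ w' ∈ Γ, relEnergy Em Set.univ p (h w') ≤ Ssup := by
      intro w' hw'
      rw [hopt w']
      exact le_csSup hbdd ⟨w', (hΓmem w').mp hw', rfl⟩
    have hS0 : 0 ≤ Ssup :=
      le_trans (Aux14.energy_nonneg Em Set.univ p (h w)) (hmemS w hwΓ)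
    -- the edgewise estimate
    have hedge : ∀ u v, Em u v →
        |φ u - φ v| ^ p ≤ N ^ (p - 1) *
          (|h w u - h w v| ^ p + ∑ w' ∈ Γ, |h w' u - h w' v| ^ p) := by
      intro u v huv
      have hRHSfac : 0 ≤ |h w u - h w v| ^ p + ∑ w' ∈ Γ, |h w' u - h w' v| ^ p := by
        have h1 := Real.rpow_nonneg (abs_nonneg (h w u - h w v)) p
        have h2 : (0 : ℝ) ≤ ∑ w' ∈ Γ, |h w' u - h w' v| ^ p :=
          Finset.sum_nonneg fun w' _ => Real.rpow_nonneg (abs_nonneg _) p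
        linarith
      by_cases hc : φ u = φ v
      · rw [hc, sub_self, abs_zero, Real.zero_rpow (by linarith : p ≠ 0)]
        exact mul_nonneg (Real.rpow_nonneg (by linarith) _) hRHSfac
      have hne : h w u ≠ 0 ∨ h w v ≠ 0 := by
        by_contra hcon
        push_neg at hcon
        apply hc
        show h w u / H u = h w v / H v
        rw [hcon.1, hcon.2, zero_div, zero_div]
      have hduv : π v ∈ Gam En 1 (π u) := by
        rcases hcompat u v huv with heq | hen
        · rw [← heq]; exact Aux14.gam_self 1 (π u)
        · exact Or.inr ⟨π u, rfl, hen⟩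
      have hdvu : π u ∈ Gam En 1 (π v) := Aux14.gam_symm hEn 1 hduv
      have hwnear : π u ∈ Gam En M w ∨ π v ∈ Gam En M w := by
        rcases hne with h1 | h1
        · left; by_contra hcon; exact h1 (hzero w u hcon)
        · right; by_contra hcon; exact h1 (hzero w v hcon)
      have hsub : ∀ w' : ι, h w' u ≠ h w' v → w' ∈ Gam En (2 * M + 1) w := by
        intro w' hne'
        have hw'near : π u ∈ Gam En M w' ∨ π v ∈ Gam En M w' := by
          by_contra hcon
          push_neg at hcon
          exact hne' (by rw [hzero w' u hcon.1, hzero w' v hcon.2])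
        have key : ∀ x y : W, π y ∈ Gam En 1 (π x) → π x ∈ Gam En M w →
            π y ∈ Gam En M w' → w' ∈ Gam En (2 * M + 1) w := by
          intro x y h1 h2 h3
          have hw'y : w' ∈ Gam En M (π y) := Aux14.gam_symm hEn M h3
          have ha : w' ∈ Gam En (1 + M) (π x) := Aux14.gam_trans M h1 hw'y
          have hb : w' ∈ Gam En (M + (1 + M)) w := Aux14.gam_trans _ h2 ha
          exact Aux14.gam_mono (by omega) w hb
        rcases hwnear with h2 | h2 <;> rcases hw'near with h3 | h3
        · exact key u u (Aux14.gam_self 1 (π u)) h2 h3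
        · exact key u v hduv h2 h3
        · exact key v u hdvu h2 h3
        · exact key v v (Aux14.gam_self 1 (π v)) h2 h3
      have hstep1 : |φ u - φ v| ≤ |h w u - h w v| + ∑ w' ∈ Γ, |h w' u - h w' v| := by
        have hid : φ u - φ v =
            (h w u - h w v) / H u + h w v * (H v - H u) / (H u * H v) := by
          show h w u / H u - h w v / H v = _
          rw [div_add_div _ _ (ne_of_gt (hHpos u)) (ne_of_gt (mul_pos (hHpos u) (hHpos v))),
            div_sub_div _ _ (ne_of_gt (hHpos u)) (ne_of_gt (hHpos v)), div_eq_div_iff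
            (ne_of_gt (mul_pos (hHpos u) (hHpos v)))
            (ne_of_gt (mul_pos (hHpos u) (mul_pos (hHpos u) (hHpos v))))]
          ring
        have hHuv : |H v - H u| ≤ ∑ w' ∈ Γ, |h w' u - h w' v| := by
          have hres : H v - H u = ∑ w' ∈ Γ, (h w' v - h w' u) := by
            show (∑ v' : ι, h v' v) - (∑ v' : ι, h v' u) = _
            rw [← Finset.sum_sub_distrib]
            refine (Finset.sum_subset (Finset.subset_univ Γ) ?_).symm
            intro w' _ hw'
            have heq : h w' u = h w' v := by
              by_contra hcon
              exact hw' ((hΓmem w').mpr (hsub w' hcon))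
            rw [heq, sub_self]
          rw [hres]
          refine le_trans (Finset.abs_sum_le_sum_abs _ _) ?_
          exact Finset.sum_le_sum fun w' _ => le_of_eq (abs_sub_comm _ _)
        have e1 : |(h w u - h w v) / H u| ≤ |h w u - h w v| := by
          rw [abs_div, abs_of_pos (hHpos u)]
          exact div_le_self (abs_nonneg _) (hH1 u)
        have e2 : |h w v * (H v - H u) / (H u * H v)| ≤ |H v - H u| := by
          rw [abs_div, abs_mul, abs_of_nonneg (hrange w v).1,
            abs_of_pos (mul_pos (hHpos u) (hHpos v))]
          have hm : h w v * |H v - H u| ≤ |H v - H u| :=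
            mul_le_of_le_one_left (abs_nonneg _) (hrange w v).2
          have h1le : (1 : ℝ) ≤ H u * H v := by nlinarith [hH1 u, hH1 v]
          have hd : h w v * |H v - H u| / (H u * H v) ≤ h w v * |H v - H u| :=
            div_le_self (mul_nonneg (hrange w v).1 (abs_nonneg _)) h1le
          linarith
        calc |φ u - φ v|
            ≤ |(h w u - h w v) / H u| + |h w v * (H v - H u) / (H u * H v)| := by
              rw [hid]; exact abs_add_le _ _
          _ ≤ |h w u - h w v| + |H v - H u| := add_le_add e1 e2
          _ ≤ |h w u - h w v| + ∑ w' ∈ Γ, |h w' u - h w' v| := by linarith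
      have hstep2 : (|h w u - h w v| + ∑ w' ∈ Γ, |h w' u - h w' v|) ^ p ≤
          N ^ (p - 1) * (|h w u - h w v| ^ p + ∑ w' ∈ Γ, |h w' u - h w' v| ^ p) := by
        classical
        set F : Finset (Option ι) := insert none (Γ.image some) with hF
        set g : Option ι → ℝ :=
          fun o => o.elim |h w u - h w v| (fun w' => |h w' u - h w' v|) with hg
        have hnone : (none : Option ι) ∉ Γ.image some := by simp
        have hsum : ∑ o ∈ F, g o = |h w u - h w v| + ∑ w' ∈ Γ, |h w' u - h w' v| := by
          rw [hF, Finset.sum_insert hnone,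
            Finset.sum_image (fun x _ y _ hxy => Option.some_injective ι hxy)]
          rfl
        have hsump : ∑ o ∈ F, g o ^ p =
            |h w u - h w v| ^ p + ∑ w' ∈ Γ, |h w' u - h w' v| ^ p := by
          rw [hF, Finset.sum_insert hnone,
            Finset.sum_image (fun x _ y _ hxy => Option.some_injective ι hxy)]
          rfl
        have hcard : (F.card : ℝ) ≤ N := by
          rw [hF, Finset.card_insert_of_notMem hnone,
            Finset.card_image_of_injective _ (Option.some_injective ι)]
          push_cast
          linarith
        have hgnn : ∀ o ∈ F, 0 ≤ g o := by
          intro o _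
          rcases o with _ | w'
          · exact abs_nonneg _
          · exact abs_nonneg _
        have hj := Real.rpow_sum_le_const_mul_sum_rpow_of_nonneg F hp hgnn
        have hsumnn : 0 ≤ ∑ o ∈ F, g o ^ p :=
          Finset.sum_nonneg fun o ho => Real.rpow_nonneg (hgnn o ho) p
        calc (|h w u - h w v| + ∑ w' ∈ Γ, |h w' u - h w' v|) ^ p
            = (∑ o ∈ F, g o) ^ p := by rw [hsum]
          _ ≤ (F.card : ℝ) ^ (p - 1) * ∑ o ∈ F, g o ^ p := hj
          _ ≤ N ^ (p - 1) * ∑ o ∈ F, g o ^ p := by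
              refine mul_le_mul_of_nonneg_right ?_ hsumnn
              exact Real.rpow_le_rpow (Nat.cast_nonneg _) hcard (by linarith)
          _ = _ := by rw [hsump]
      calc |φ u - φ v| ^ p
          ≤ (|h w u - h w v| + ∑ w' ∈ Γ, |h w' u - h w' v|) ^ p :=
            Real.rpow_le_rpow (abs_nonneg _) hstep1 (by linarith)
        _ ≤ _ := hstep2
    -- now sum over edges
    set e : (W → ℝ) → ℝ :=
      fun f => ∑ x, ∑ y, (if Em x y then |f x - f y| ^ p else 0) with he
    have hEmsimp : ∀ f : W → ℝ, relEnergy Em Set.univ p f = (1 / 2) * e f := by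
      intro f
      unfold relEnergy
      rw [he]
      congr 1
      refine Finset.sum_congr rfl fun x _ => Finset.sum_congr rfl fun y _ => ?_
      simp [Set.mem_univ]
    have hswap : ∀ f : ι → W → W → ℝ,
        ∑ x : W, ∑ y : W, ∑ w' ∈ Γ, f w' x y =
          ∑ w' ∈ Γ, ∑ x : W, ∑ y : W, f w' x y := by
      intro f
      calc ∑ x : W, ∑ y : W, ∑ w' ∈ Γ, f w' x y
          = ∑ x : W, ∑ w' ∈ Γ, ∑ y : W, f w' x y :=
            Finset.sum_congr rfl fun x _ => Finset.sum_comm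
        _ = ∑ w' ∈ Γ, ∑ x : W, ∑ y : W, f w' x y := Finset.sum_comm
    have hsum1 : e φ ≤ N ^ (p - 1) * (e (h w) + ∑ w' ∈ Γ, e (h w')) := by
      have hptwise : ∀ x y : W, (if Em x y then |φ x - φ y| ^ p else 0) ≤
          N ^ (p - 1) * ((if Em x y then |h w x - h w y| ^ p else 0)
            + ∑ w' ∈ Γ, (if Em x y then |h w' x - h w' y| ^ p else 0)) := by
        intro x y
        by_cases hxy : Em x y
        · simp only [if_pos hxy]
          exact hedge x y hxy
        · simp only [if_neg hxy, Finset.sum_const_zero, add_zero, mul_zero, le_refl]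
      calc e φ ≤ ∑ x : W, ∑ y : W,
            (N ^ (p - 1) * ((if Em x y then |h w x - h w y| ^ p else 0)
              + ∑ w' ∈ Γ, (if Em x y then |h w' x - h w' y| ^ p else 0))) := by
            rw [he]
            exact Finset.sum_le_sum fun x _ =>
              Finset.sum_le_sum fun y _ => hptwise x y
        _ = N ^ (p - 1) * (e (h w) + ∑ w' ∈ Γ, e (h w')) := by
            simp only [← Finset.mul_sum]
            congr 1
            rw [he]
            simp only [Finset.sum_add_distrib]
            congr 1
            exact hswap fun w' x y => if Em x y then |h w' x - h w' y| ^ p else 0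
    have hew : ∀ w' ∈ Γ, e (h w') ≤ 2 * Ssup := by
      intro w' hw'
      have := hmemS w' hw'
      rw [hEmsimp (h w')] at this
      linarith
    have hsumΓ : ∑ w' ∈ Γ, e (h w') ≤ (Γ.card : ℝ) * (2 * Ssup) := by
      have := Finset.sum_le_card_nsmul Γ (fun w' => e (h w')) (2 * Ssup) hew
      rwa [nsmul_eq_mul] at this
    have hNp : N ^ (p - 1) * N = N ^ p := by
      rw [← Real.rpow_add_one (ne_of_gt hNpos) (p - 1)]
      norm_num
    have hNpow_nn : (0 : ℝ) ≤ N ^ (p - 1) := Real.rpow_nonneg (le_of_lt hNpos) _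
    rw [hEmsimp φ]
    calc (1 / 2) * e φ
        ≤ (1 / 2) * (N ^ (p - 1) * (e (h w) + ∑ w' ∈ Γ, e (h w'))) := by linarith
      _ ≤ (1 / 2) * (N ^ (p - 1) * (2 * Ssup + (Γ.card : ℝ) * (2 * Ssup))) := by
          have h1 : e (h w) ≤ 2 * Ssup := hew w hwΓ
          have h2 : e (h w) + ∑ w' ∈ Γ, e (h w') ≤
              2 * Ssup + (Γ.card : ℝ) * (2 * Ssup) := by linarith
          nlinarith [mul_le_mul_of_nonneg_left h2 hNpow_nn]
      _ = N ^ (p - 1) * ((1 + (Γ.card : ℝ)) * Ssup) := by ring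
      _ ≤ N ^ (p - 1) * (N * Ssup) := by
          have : (1 + (Γ.card : ℝ)) * Ssup ≤ N * Ssup := by nlinarith
          nlinarith
      _ = N ^ p * Ssup := by rw [← hNp]; ring
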